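/- For fixed real numbers ν>0 and k≥1, the function A(x) = ((1+x²)/x^{1/k}) · e^{−νx} · ∫₀ˣ (x−h)^{1/k} · (h^{1/k}/(1+h²)) · e^{νh} · (dh/h) is bounded on (0,∞). -/

import Mathlib

open MeasureTheory Real

private lemma rpow_integrableOn_Ioo {r : ℝ} (hr : 0 < r) {x : ℝ} (hx : 0 < x) :
    IntegrableOn (fun h : ℝ => h ^ (r - 1)) (Set.Ioo 0 x) := by
  have h1 := intervalIntegral.intervalIntegrable_rpow' (a := 0) (b := x) (r := r - 1)
    (by linarith)
  rw [intervalIntegrable_iff_integrableOn_Ioc_of_le hx.le] at h1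
  exact h1.mono_set Set.Ioo_subset_Ioc_self

private lemma rpow_integral_Ioo {r : ℝ} (hr : 0 < r) {x : ℝ} (hx : 0 < x) :
    ∫ h in Set.Ioo (0 : ℝ) x, h ^ (r - 1) = x ^ r / r := by
  rw [← integral_Ioc_eq_integral_Ioo, ← intervalIntegral.integral_of_le hx.le,
    integral_rpow (Or.inl (by linarith))]
  rw [sub_add_cancel, Real.zero_rpow hr.ne', sub_zero]

private lemma exp_integrableOn_Ioo (ν : ℝ) {x : ℝ} (hx : 0 < x) :
    IntegrableOn (fun h : ℝ => Real.exp (ν * h)) (Set.Ioo 0 x) := by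
  have h1 : IntervalIntegrable (fun h : ℝ => Real.exp (ν * h)) volume 0 x :=
    (Real.continuous_exp.comp (continuous_const.mul continuous_id)).intervalIntegrable 0 x
  rw [intervalIntegrable_iff_integrableOn_Ioc_of_le hx.le] at h1
  exact h1.mono_set Set.Ioo_subset_Ioc_self

private lemma exp_integral_Ioo {ν : ℝ} (hν : 0 < ν) {x : ℝ} (hx : 0 < x) :
    ∫ h in Set.Ioo (0 : ℝ) x, Real.exp (ν * h) = (Real.exp (ν * x) - 1) / ν := by
  rw [← integral_Ioc_eq_integral_Ioo, ← intervalIntegral.integral_of_le hx.le]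
  have h1 := intervalIntegral.mul_integral_comp_mul_left (a := 0) (b := x) (c := ν)
    (f := Real.exp)
  rw [mul_zero, integral_exp, Real.exp_zero] at h1
  field_simp [hν.ne'] at h1 ⊢
  exact h1

set_option maxHeartbeats 1000000 in
theorem boundedness_of_A (ν : ℝ) (hν : 0 < ν) (k : ℕ) (hk : 1 ≤ k) :
    ∃ C : ℝ, ∀ x : ℝ, 0 < x →
      ((1 + x ^ 2) / x ^ ((1 : ℝ) / k)) * Real.exp (-ν * x) *
        ∫ h in Set.Ioo (0 : ℝ) x,
          (x - h) ^ ((1 : ℝ) / k) * (h ^ ((1 : ℝ) / k) / (1 + h ^ 2)) *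
            Real.exp (ν * h) / h ≤ C := by
  have hk0 : (0:ℝ) < k := by exact_mod_cast hk
  have hk1 : (1:ℝ) ≤ k := by exact_mod_cast hk
  set r : ℝ := (1:ℝ)/(k:ℝ) with hrdef
  have hr : 0 < r := by positivity
  have hr1 : r ≤ 1 := by rw [hrdef, div_le_one hk0]; exact_mod_cast hk
  have hinv : 1 / r = (k:ℝ) := by rw [hrdef]; field_simp
  refine ⟨10 * k * Real.exp (2*ν) + (8192 * k / ν^4 + 8/ν), fun x hx => ?_⟩
  have hxr : (0:ℝ) < x ^ r := Real.rpow_pos_of_pos hx r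
  have hpre : 0 ≤ ((1 + x ^ 2) / x ^ r) * Real.exp (-ν * x) := by positivity
  have hC2 : 0 ≤ 8192 * (k:ℝ) / ν^4 + 8/ν := by positivity
  have hC1 : 0 ≤ 10 * (k:ℝ) * Real.exp (2*ν) := by positivity
  -- nonnegativity of integrand (a.e. on the restricted measure)
  have hfnn : 0 ≤ᵐ[volume.restrict (Set.Ioo (0:ℝ) x)]
      fun h => (x - h) ^ r * (h ^ r / (1 + h ^ 2)) * Real.exp (ν * h) / h := by
    refine (MeasureTheory.ae_restrict_iff' measurableSet_Ioo).mpr ?_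
    filter_upwards with h hh
    obtain ⟨h0, hhx⟩ := hh
    have : (0:ℝ) ≤ x - h := by linarith
    positivity
  rcases le_or_gt x 2 with hx2 | hx2
  · -- small case : x ≤ 2
    have hgint : IntegrableOn (fun h : ℝ => Real.exp (2*ν) * x ^ r * h ^ (r-1))
        (Set.Ioo 0 x) := (rpow_integrableOn_Ioo hr hx).const_mul _
    have hmono : (∫ h in Set.Ioo (0:ℝ) x,
          (x - h) ^ r * (h ^ r / (1 + h ^ 2)) * Real.exp (ν * h) / h)
        ≤ ∫ h in Set.Ioo (0:ℝ) x, Real.exp (2*ν) * x ^ r * h ^ (r-1) := by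
      refine integral_mono_of_nonneg hfnn hgint ?_
      refine (MeasureTheory.ae_restrict_iff' measurableSet_Ioo).mpr ?_
      filter_upwards with h hh
      obtain ⟨h0, hhx⟩ := hh
      have hxh : (0:ℝ) ≤ x - h := by linarith
      have e1 : h ^ (r - 1) = h ^ r / h := by
        rw [Real.rpow_sub h0, Real.rpow_one]
      have b1 : (x - h) ^ r ≤ x ^ r := Real.rpow_le_rpow hxh (by linarith) hr.le
      have b2 : Real.exp (ν * h) ≤ Real.exp (2*ν) := Real.exp_le_exp.mpr (by nlinarith)
      have b3 : (1:ℝ) ≤ 1 + h^2 := by nlinarith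
      calc (x - h) ^ r * (h ^ r / (1 + h ^ 2)) * Real.exp (ν * h) / h
          ≤ x ^ r * (h ^ r / 1) * Real.exp (2*ν) / h := by gcongr
        _ = Real.exp (2*ν) * x ^ r * (h ^ r / h) := by ring
        _ = Real.exp (2*ν) * x ^ r * h ^ (r-1) := by rw [e1]
    have hIg : (∫ h in Set.Ioo (0:ℝ) x, Real.exp (2*ν) * x ^ r * h ^ (r-1))
        = Real.exp (2*ν) * x ^ r * (x ^ r / r) := by
      rw [MeasureTheory.integral_const_mul, rpow_integral_Ioo hr hx]
    have hxrle : x ^ r ≤ 2 := by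
      calc x ^ r ≤ (2:ℝ) ^ r := Real.rpow_le_rpow hx.le hx2 hr.le
        _ ≤ (2:ℝ) ^ (1:ℝ) := Real.rpow_le_rpow_of_exponent_le one_le_two hr1
        _ = 2 := Real.rpow_one 2
    calc ((1 + x ^ 2) / x ^ r) * Real.exp (-ν * x) *
          ∫ h in Set.Ioo (0:ℝ) x,
            (x - h) ^ r * (h ^ r / (1 + h ^ 2)) * Real.exp (ν * h) / h
        ≤ ((1 + x ^ 2) / x ^ r) * Real.exp (-ν * x) *
            (Real.exp (2*ν) * x ^ r * (x ^ r / r)) := by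
          rw [← hIg]; exact mul_le_mul_of_nonneg_left hmono hpre
      _ = (1 + x ^ 2) * Real.exp (-ν * x) * Real.exp (2*ν) * x ^ r * k := by
          have e2 : x ^ r / r = x ^ r * k := by
            rw [div_eq_mul_inv, ← hinv, one_div]
          rw [e2]; field_simp
      _ ≤ 5 * 1 * Real.exp (2*ν) * 2 * k := by
          gcongr
          · nlinarith
          · exact Real.exp_le_one_iff.mpr (by nlinarith)
      _ = 10 * k * Real.exp (2*ν) := by ring
      _ ≤ 10 * k * Real.exp (2*ν) + (8192 * k / ν^4 + 8/ν) := by linarith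
  · -- large case : 2 < x
    have hx1 : (1:ℝ) ≤ x := by linarith
    have hgint : IntegrableOn (fun h : ℝ => x ^ r * Real.exp (ν*x/2) * h ^ (r-1)
        + x ^ r / (1 + (x/2)^2) * Real.exp (ν * h)) (Set.Ioo 0 x) :=
      ((rpow_integrableOn_Ioo hr hx).const_mul _).add
        ((exp_integrableOn_Ioo ν hx).const_mul _)
    have hmono : (∫ h in Set.Ioo (0:ℝ) x,
          (x - h) ^ r * (h ^ r / (1 + h ^ 2)) * Real.exp (ν * h) / h)
        ≤ ∫ h in Set.Ioo (0:ℝ) x, (x ^ r * Real.exp (ν*x/2) * h ^ (r-1)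
            + x ^ r / (1 + (x/2)^2) * Real.exp (ν * h)) := by
      refine integral_mono_of_nonneg hfnn hgint ?_
      refine (MeasureTheory.ae_restrict_iff' measurableSet_Ioo).mpr ?_
      filter_upwards with h hh
      obtain ⟨h0, hhx⟩ := hh
      have hxh : (0:ℝ) ≤ x - h := by linarith
      have e1 : h ^ (r - 1) = h ^ r / h := by
        rw [Real.rpow_sub h0, Real.rpow_one]
      have b1 : (x - h) ^ r ≤ x ^ r := Real.rpow_le_rpow hxh (by linarith) hr.le
      rcases le_or_gt h (x/2) with hc | hc
      · have b2 : Real.exp (ν * h) ≤ Real.exp (ν*x/2) := Real.exp_le_exp.mpr (by nlinarith)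
        have b3 : (1:ℝ) ≤ 1 + h^2 := by nlinarith
        have hnn2 : 0 ≤ x ^ r / (1 + (x/2)^2) * Real.exp (ν * h) := by positivity
        have step : (x - h) ^ r * (h ^ r / (1 + h ^ 2)) * Real.exp (ν * h) / h
            ≤ x ^ r * Real.exp (ν*x/2) * h ^ (r-1) := by
          rw [e1]
          calc (x - h) ^ r * (h ^ r / (1 + h ^ 2)) * Real.exp (ν * h) / h
              ≤ x ^ r * (h ^ r / 1) * Real.exp (ν*x/2) / h := by gcongr
            _ = x ^ r * Real.exp (ν*x/2) * (h ^ r / h) := by ring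
        linarith
      · have h1 : (1:ℝ) ≤ h := by linarith
        have b2 : h ^ (r-1) ≤ 1 := Real.rpow_le_one_of_one_le_of_nonpos h1 (by linarith)
        have b3 : 1 + (x/2)^2 ≤ 1 + h^2 := by nlinarith
        have hnn1 : 0 ≤ x ^ r * Real.exp (ν*x/2) * h ^ (r-1) := by positivity
        have step : (x - h) ^ r * (h ^ r / (1 + h ^ 2)) * Real.exp (ν * h) / h
            ≤ x ^ r / (1 + (x/2)^2) * Real.exp (ν * h) := by
          calc (x - h) ^ r * (h ^ r / (1 + h ^ 2)) * Real.exp (ν * h) / h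
              = (x - h) ^ r * (h ^ r / h) * (Real.exp (ν * h) / (1 + h^2)) := by ring
            _ = (x - h) ^ r * h ^ (r-1) * (Real.exp (ν * h) / (1 + h^2)) := by rw [← e1]
            _ ≤ x ^ r * 1 * (Real.exp (ν * h) / (1 + (x/2)^2)) := by gcongr
            _ = x ^ r / (1 + (x/2)^2) * Real.exp (ν * h) := by ring
        linarith
    have hIg : (∫ h in Set.Ioo (0:ℝ) x, (x ^ r * Real.exp (ν*x/2) * h ^ (r-1)
          + x ^ r / (1 + (x/2)^2) * Real.exp (ν * h)))
        = x ^ r * Real.exp (ν*x/2) * (x ^ r / r)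
          + x ^ r / (1 + (x/2)^2) * ((Real.exp (ν*x) - 1)/ν) := by
      rw [MeasureTheory.integral_add ((rpow_integrableOn_Ioo hr hx).const_mul _)
        ((exp_integrableOn_Ioo ν hx).const_mul _),
        MeasureTheory.integral_const_mul, MeasureTheory.integral_const_mul,
        rpow_integral_Ioo hr hx, exp_integral_Ioo hν hx]
    have hxrlex : x ^ r ≤ x := by
      calc x ^ r ≤ x ^ (1:ℝ) := Real.rpow_le_rpow_of_exponent_le hx1 hr1
        _ = x := Real.rpow_one x
    have e2 : x ^ r / r = x ^ r * k := by rw [div_eq_mul_inv, ← hinv, one_div]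
    have hT1 : ((1 + x^2)/x^r) * Real.exp (-ν*x) * (x ^ r * Real.exp (ν*x/2) * (x ^ r / r))
        ≤ 8192 * k / ν^4 := by
      have eE : Real.exp (-ν*x) * Real.exp (ν*x/2) = Real.exp (-(ν*x/2)) := by
        rw [← Real.exp_add]; congr 1; ring
      have hexp : Real.exp (-(ν*x/2)) ≤ 4096/(ν^4 * x^4) := by
        have t0 : ν*x/8 ≤ Real.exp (ν*x/8) := by
          nlinarith [Real.add_one_le_exp (ν*x/8)]
        have t4 : (ν*x/8)^4 ≤ (Real.exp (ν*x/8))^4 := pow_le_pow_left₀ (by positivity) t0 4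
        have t5 : (Real.exp (ν*x/8))^4 = Real.exp (ν*x/2) := by
          rw [← Real.exp_nat_mul]; congr 1; push_cast; ring
        rw [t5] at t4
        rw [Real.exp_neg]
        calc (Real.exp (ν*x/2))⁻¹ ≤ ((ν*x/8)^4)⁻¹ := by
              exact inv_anti₀ (by positivity) t4
          _ = 4096/(ν^4*x^4) := by
              rw [inv_eq_one_div]; rw [div_eq_div_iff (by positivity) (by positivity)]; ring
      have hx3 : (1:ℝ) ≤ x^3 := one_le_pow₀ hx1
      have hpoly : (1 + x^2) * x ≤ 2 * x^4 := by
        nlinarith [mul_nonneg (pow_nonneg hx.le 3) (sub_nonneg.mpr hx1),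
          mul_nonneg hx.le (sub_nonneg.mpr hx3)]
      calc ((1 + x^2)/x^r) * Real.exp (-ν*x) * (x ^ r * Real.exp (ν*x/2) * (x ^ r / r))
          = (1 + x^2) * (Real.exp (-ν*x) * Real.exp (ν*x/2)) * x ^ r * k := by
            rw [e2]; field_simp
        _ = (1 + x^2) * Real.exp (-(ν*x/2)) * x ^ r * k := by rw [eE]
        _ ≤ (1 + x^2) * (4096/(ν^4 * x^4)) * x * k := by gcongr
        _ ≤ 8192 * k / ν^4 := by
            rw [show (1 + x^2) * (4096/(ν^4 * x^4)) * x * (k:ℝ)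
                = (4096*((1+x^2)*x)*k)/(ν^4*x^4) by ring,
              div_le_div_iff₀ (by positivity) (by positivity)]
            have := mul_le_mul_of_nonneg_right hpoly
              (by positivity : (0:ℝ) ≤ (k:ℝ)*ν^4*x^4/x^4)
            nlinarith [mul_le_mul_of_nonneg_right hpoly (by positivity : (0:ℝ) ≤ (k:ℝ)*ν^4)]
    have hT2 : ((1 + x^2)/x^r) * Real.exp (-ν*x)
          * (x ^ r / (1 + (x/2)^2) * ((Real.exp (ν*x) - 1)/ν))
        ≤ 8/ν := by
      have eq2 : Real.exp (-ν*x) * (Real.exp (ν*x) - 1) = 1 - Real.exp (-ν*x) := by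
        rw [mul_sub, ← Real.exp_add, show -ν*x + ν*x = 0 by ring, Real.exp_zero, mul_one]
      have he : 0 ≤ Real.exp (-ν*x) := (Real.exp_pos _).le
      have he1 : Real.exp (-ν*x) ≤ 1 := Real.exp_le_one_iff.mpr (by nlinarith)
      calc ((1 + x^2)/x^r) * Real.exp (-ν*x)
            * (x ^ r / (1 + (x/2)^2) * ((Real.exp (ν*x) - 1)/ν))
          = (1 + x^2) * (Real.exp (-ν*x) * (Real.exp (ν*x) - 1)) / ((1 + (x/2)^2) * ν) := by
            field_simp
        _ = (1 + x^2) * (1 - Real.exp (-ν*x)) / ((1 + (x/2)^2) * ν) := by rw [eq2]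
        _ ≤ 8/ν := by
            rw [div_le_div_iff₀ (by positivity) hν]
            nlinarith [mul_le_mul_of_nonneg_right
              (by nlinarith : (1 + x^2) * (1 - Real.exp (-ν*x)) ≤ 1 + x^2) hν.le,
              mul_le_mul_of_nonneg_right (sq_nonneg x) hν.le]
    calc ((1 + x ^ 2) / x ^ r) * Real.exp (-ν * x) *
          ∫ h in Set.Ioo (0:ℝ) x,
            (x - h) ^ r * (h ^ r / (1 + h ^ 2)) * Real.exp (ν * h) / h
        ≤ ((1 + x ^ 2) / x ^ r) * Real.exp (-ν * x) *
            (x ^ r * Real.exp (ν*x/2) * (x ^ r / r)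
              + x ^ r / (1 + (x/2)^2) * ((Real.exp (ν*x) - 1)/ν)) := by
          rw [← hIg]; exact mul_le_mul_of_nonneg_left hmono hpre
      _ = ((1 + x^2)/x^r) * Real.exp (-ν*x) * (x ^ r * Real.exp (ν*x/2) * (x ^ r / r))
          + ((1 + x^2)/x^r) * Real.exp (-ν*x)
            * (x ^ r / (1 + (x/2)^2) * ((Real.exp (ν*x) - 1)/ν)) := by ring
      _ ≤ 8192 * k / ν^4 + 8/ν := add_le_add hT1 hT2
      _ ≤ 10 * k * Real.exp (2*ν) + (8192 * k / ν^4 + 8/ν) := by linarith
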